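/- Let 4 ≤ p < q and n = p + q. Then S_i(D_{p,q}^{2,0}) = S_i(B_{p,q}^{2,0}) for i = 0, 1, 2, 3 and S_4(B_{p,q}^{2,0}) − S_4(D_{p,q}^{2,0}) = 8(q − p) > 0; in particular D_{p,q}^{2,0} ≺_s B_{p,q}^{2,0}. -/

import Mathlib

open SimpleGraph

open scoped Classical in
/-- The adjacency matrix of a simple graph, with real entries. -/
noncomputable def adjMat {V : Type*} [Fintype V] (G : SimpleGraph V) : Matrix V V ℝ :=
  Matrix.of fun a b => if G.Adj a b then 1 else 0

/-- The `k`-th spectral moment `S_k(G) = tr(A(G)^k)`. -/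
noncomputable def spectralMoment {V : Type*} [Fintype V] [DecidableEq V]
    (G : SimpleGraph V) (k : ℕ) : ℝ :=
  Matrix.trace (adjMat G ^ k)

/-- `SLt G₁ G₂` means `G₁ ≺_s G₂`: for some `k` with `1 ≤ k ≤ n - 1`,
`S_i(G₁) = S_i(G₂)` for all `i < k` and `S_k(G₁) < S_k(G₂)`. -/
def SLt {V : Type*} [Fintype V] [DecidableEq V] (G₁ G₂ : SimpleGraph V) : Prop :=
  ∃ k : ℕ, 1 ≤ k ∧ k ≤ Fintype.card V - 1 ∧
    (∀ i < k, spectralMoment G₁ i = spectralMoment G₂ i) ∧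
    spectralMoment G₁ k < spectralMoment G₂ k

/-- The tree `B_{p,q}^{k,l}` on `p + q` vertices: vertex `0 = u` is adjacent to `1 = v`
and to the `q - 1` vertices `2, …, q`; the distinguished neighbor `2` of `u` carries the
`k` pendant leaves `q+1, …, q+k`; the `l` neighbors `3, …, l+2` of `u` carry one pendant
leaf each (`q+k+j` is attached to `j+2` for `1 ≤ j ≤ l`); and `v` carries the
`p - k - l - 1` pendant leaves `q+k+l+1, …, p+q-1`. -/
def BTree (p q k l : ℕ) : SimpleGraph (Fin (p + q)) :=
  SimpleGraph.fromRel (fun a b =>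
    (a.val = 0 ∧ b.val = 1) ∨
    (a.val = 0 ∧ 2 ≤ b.val ∧ b.val ≤ q) ∨
    (a.val = 2 ∧ q + 1 ≤ b.val ∧ b.val ≤ q + k) ∨
    (q + k + 1 ≤ b.val ∧ b.val ≤ q + k + l ∧ a.val = b.val - (q + k) + 2) ∨
    (a.val = 1 ∧ q + k + l + 1 ≤ b.val))

/-- The tree `D_{p,q}^{k,l}` on `p + q` vertices: vertex `1 = v` is adjacent to `0 = u`
and to the `p - 1` vertices `2, …, p`; the distinguished neighbor `2` of `v` carries the
`k` pendant leaves `p+1, …, p+k`; the `l` neighbors `3, …, l+2` of `v` carry one pendant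
leaf each; and `u` carries the `q - k - l - 1` pendant leaves `p+k+l+1, …, p+q-1`. -/
def DTree (p q k l : ℕ) : SimpleGraph (Fin (p + q)) :=
  SimpleGraph.fromRel (fun a b =>
    (a.val = 0 ∧ b.val = 1) ∨
    (a.val = 1 ∧ 2 ≤ b.val ∧ b.val ≤ p) ∨
    (a.val = 2 ∧ p + 1 ≤ b.val ∧ b.val ≤ p + k) ∨
    (p + k + 1 ≤ b.val ∧ b.val ≤ p + k + l ∧ a.val = b.val - (p + k) + 2) ∨
    (a.val = 0 ∧ p + k + l + 1 ≤ b.val))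

/-- `T ∈ 𝒯_{p+q}^{p,q}`: `T` is a tree on `p + q` vertices with a `(p,q)`-bipartition. -/
def TreeBip (p q : ℕ) (G : SimpleGraph (Fin (p + q))) : Prop :=
  G.IsTree ∧ ∃ A : Finset (Fin (p + q)), A.card = p ∧
    ∀ ⦃x y : Fin (p + q)⦄, G.Adj x y → (x ∈ A ↔ y ∉ A)

/-! ### Auxiliary machinery -/

noncomputable def ind (n a c : ℕ) : Fin n → ℝ := fun x => if a ≤ x.val ∧ x.val ≤ c then 1 else 0

lemma ind_dot (n a c a' c' : ℕ) :
    dotProduct (ind n a c) (ind n a' c')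
      = ((min (min c c' + 1) n - max a a' : ℕ) : ℝ) := by
  classical
  unfold dotProduct ind
  calc (∑ x : Fin n, (if a ≤ x.val ∧ x.val ≤ c then (1:ℝ) else 0)
          * (if a' ≤ x.val ∧ x.val ≤ c' then (1:ℝ) else 0))
      = ∑ x : Fin n, (fun i : ℕ => if max a a' ≤ i ∧ i ≤ min c c' then (1:ℝ) else 0) x.val := by
        refine Finset.sum_congr rfl fun x _ => ?_
        rw [ite_zero_mul_ite_zero, one_mul]
        congr 1
        simp only [eq_iff_iff]
        omega
    _ = ∑ i ∈ Finset.range n, (if max a a' ≤ i ∧ i ≤ min c c' then (1:ℝ) else 0) :=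
        Fin.sum_univ_eq_sum_range (fun i => if max a a' ≤ i ∧ i ≤ min c c' then (1:ℝ) else 0) n
    _ = (((Finset.range n).filter fun i => max a a' ≤ i ∧ i ≤ min c c').card : ℝ) := by
        rw [Finset.sum_boole]
    _ = _ := by
        congr 1
        have h : (Finset.range n).filter (fun i => max a a' ≤ i ∧ i ≤ min c c')
            = Finset.Ico (max a a') (min (min c c' + 1) n) := by
          ext i
          simp only [Finset.mem_filter, Finset.mem_range, Finset.mem_Ico]
          omega
        rw [h, Nat.card_Ico]

lemma trace_vecMulVec {V : Type*} [Fintype V] (x y : V → ℝ) :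
    Matrix.trace (Matrix.vecMulVec x y) = dotProduct x y := by
  simp [Matrix.trace, Matrix.diag, Matrix.vecMulVec_apply, dotProduct]

lemma vecMulVec_mul_vecMulVec {V : Type*} [Fintype V] (x y z w : V → ℝ) :
    Matrix.vecMulVec x y * Matrix.vecMulVec z w
      = dotProduct y z • Matrix.vecMulVec x w := by
  ext a b
  simp only [Matrix.mul_apply, Matrix.vecMulVec_apply, Matrix.smul_apply, smul_eq_mul,
    dotProduct, Finset.sum_mul]
  exact Finset.sum_congr rfl fun c _ => by ring

lemma sum_vecMulVec_pow {ι V : Type*} [Fintype ι] [DecidableEq ι] [Fintype V] [DecidableEq V]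
    (a b : ι → V → ℝ) (k : ℕ) :
    (∑ i, Matrix.vecMulVec (a i) (b i)) ^ (k + 1)
      = ∑ i, ∑ j, ((Matrix.of fun i j => dotProduct (b i) (a j)) ^ k) i j
          • Matrix.vecMulVec (a i) (b j) := by
  induction k with
  | zero =>
      simp [Matrix.one_apply, ite_smul, zero_smul, Matrix.of_apply, Finset.sum_ite_eq]
  | succ k ih =>
      rw [pow_succ, ih, Finset.sum_mul]
      refine Finset.sum_congr rfl fun i _ => ?_
      rw [Finset.sum_mul]
      have h1 : ∀ j, (((Matrix.of fun i j => dotProduct (b i) (a j)) ^ k) i j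
              • Matrix.vecMulVec (a i) (b j)) * (∑ l, Matrix.vecMulVec (a l) (b l))
          = ∑ l, ((((Matrix.of fun i j => dotProduct (b i) (a j)) ^ k) i j *
              dotProduct (b j) (a l)) • Matrix.vecMulVec (a i) (b l)) := by
        intro j
        rw [smul_mul_assoc, Matrix.mul_sum, Finset.smul_sum]
        refine Finset.sum_congr rfl fun l _ => ?_
        rw [vecMulVec_mul_vecMulVec, smul_smul]
      rw [Finset.sum_congr rfl fun j _ => h1 j, Finset.sum_comm]
      refine Finset.sum_congr rfl fun l _ => ?_
      rw [← Finset.sum_smul]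
      congr 1

lemma trace_sum_vecMulVec_pow {ι V : Type*} [Fintype ι] [DecidableEq ι] [Fintype V] [DecidableEq V]
    (a b : ι → V → ℝ) (k : ℕ) :
    Matrix.trace ((∑ i, Matrix.vecMulVec (a i) (b i)) ^ (k + 1))
      = Matrix.trace ((Matrix.of fun i j => dotProduct (b i) (a j)) ^ (k + 1)) := by
  rw [sum_vecMulVec_pow]
  simp only [Matrix.trace_sum, Matrix.trace_smul, smul_eq_mul, trace_vecMulVec]
  conv_rhs => rw [pow_succ, Matrix.trace]
  simp only [Matrix.diag_apply, Matrix.mul_apply, Matrix.of_apply]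
  refine Finset.sum_congr rfl fun i _ => Finset.sum_congr rfl fun j _ => ?_
  rw [dotProduct_comm]

lemma myIteAdd (P Q : Prop) [Decidable P] [Decidable Q] (h : ¬(P ∧ Q)) :
    (if P then (1:ℝ) else 0) + (if Q then (1:ℝ) else 0) = if P ∨ Q then 1 else 0 := by
  split_ifs <;> norm_num <;> tauto

/-! ### Rank-one decompositions of the two adjacency matrices -/

noncomputable def aB (p q : ℕ) : Fin 8 → Fin (p+q) → ℝ
  | 0 => ind (p+q) 0 0
  | 1 => ind (p+q) 1 1
  | 2 => ind (p+q) 0 0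
  | 3 => ind (p+q) 2 q
  | 4 => ind (p+q) 2 2
  | 5 => ind (p+q) (q+1) (q+2)
  | 6 => ind (p+q) 1 1
  | 7 => ind (p+q) (q+3) (p+q)

noncomputable def bB (p q : ℕ) : Fin 8 → Fin (p+q) → ℝ
  | 0 => ind (p+q) 1 1
  | 1 => ind (p+q) 0 0
  | 2 => ind (p+q) 2 q
  | 3 => ind (p+q) 0 0
  | 4 => ind (p+q) (q+1) (q+2)
  | 5 => ind (p+q) 2 2
  | 6 => ind (p+q) (q+3) (p+q)
  | 7 => ind (p+q) 1 1

noncomputable def aD (p q : ℕ) : Fin 8 → Fin (p+q) → ℝ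
  | 0 => ind (p+q) 1 1
  | 1 => ind (p+q) 0 0
  | 2 => ind (p+q) 1 1
  | 3 => ind (p+q) 2 p
  | 4 => ind (p+q) 2 2
  | 5 => ind (p+q) (p+1) (p+2)
  | 6 => ind (p+q) 0 0
  | 7 => ind (p+q) (p+3) (p+q)

noncomputable def bD (p q : ℕ) : Fin 8 → Fin (p+q) → ℝ
  | 0 => ind (p+q) 0 0
  | 1 => ind (p+q) 1 1
  | 2 => ind (p+q) 2 p
  | 3 => ind (p+q) 1 1
  | 4 => ind (p+q) (p+1) (p+2)
  | 5 => ind (p+q) 2 2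
  | 6 => ind (p+q) (p+3) (p+q)
  | 7 => ind (p+q) 0 0

set_option maxHeartbeats 1600000 in
lemma adjMat_B (p q : ℕ) (hp : 4 ≤ p) (hpq : p < q) :
    adjMat (BTree p q 2 0) = ∑ i : Fin 8, Matrix.vecMulVec (aB p q i) (bB p q i) := by
  ext x y
  have hx := x.isLt
  have hy := y.isLt
  have hxy : (x = y) ↔ (x.val = y.val) := Fin.ext_iff
  simp only [adjMat, Matrix.of_apply, Matrix.sum_apply, Matrix.vecMulVec_apply,
    Fin.sum_univ_eight, aB, bB, ind, BTree, SimpleGraph.fromRel_adj, ne_eq, hxy,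
    ite_zero_mul_ite_zero, one_mul]
  rw [myIteAdd _ _ (by omega), myIteAdd _ _ (by omega), myIteAdd _ _ (by omega),
    myIteAdd _ _ (by omega), myIteAdd _ _ (by omega), myIteAdd _ _ (by omega),
    myIteAdd _ _ (by omega)]
  exact if_congr (by omega) rfl rfl

set_option maxHeartbeats 1600000 in
lemma adjMat_D (p q : ℕ) (hp : 4 ≤ p) (hpq : p < q) :
    adjMat (DTree p q 2 0) = ∑ i : Fin 8, Matrix.vecMulVec (aD p q i) (bD p q i) := by
  ext x y
  have hx := x.isLt
  have hy := y.isLt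
  have hxy : (x = y) ↔ (x.val = y.val) := Fin.ext_iff
  simp only [adjMat, Matrix.of_apply, Matrix.sum_apply, Matrix.vecMulVec_apply,
    Fin.sum_univ_eight, aD, bD, ind, DTree, SimpleGraph.fromRel_adj, ne_eq, hxy,
    ite_zero_mul_ite_zero, one_mul]
  rw [myIteAdd _ _ (by omega), myIteAdd _ _ (by omega), myIteAdd _ _ (by omega),
    myIteAdd _ _ (by omega), myIteAdd _ _ (by omega), myIteAdd _ _ (by omega),
    myIteAdd _ _ (by omega)]
  exact if_congr (by omega) rfl rfl

noncomputable def NN (α β : ℕ) : Matrix (Fin 8) (Fin 8) ℝ := Matrix.of fun i j =>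
  (if i.val = 0 ∧ j.val = 1 then 1 else 0) +
  (if i.val = 0 ∧ j.val = 6 then 1 else 0) +
  (if i.val = 1 ∧ j.val = 0 then 1 else 0) +
  (if i.val = 1 ∧ j.val = 2 then 1 else 0) +
  (if i.val = 2 ∧ j.val = 3 then (α:ℝ) else 0) +
  (if i.val = 2 ∧ j.val = 4 then 1 else 0) +
  (if i.val = 3 ∧ j.val = 0 then 1 else 0) +
  (if i.val = 3 ∧ j.val = 2 then 1 else 0) +
  (if i.val = 4 ∧ j.val = 5 then 2 else 0) +
  (if i.val = 5 ∧ j.val = 3 then 1 else 0) +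
  (if i.val = 5 ∧ j.val = 4 then 1 else 0) +
  (if i.val = 6 ∧ j.val = 7 then (β:ℝ) else 0) +
  (if i.val = 7 ∧ j.val = 1 then 1 else 0) +
  (if i.val = 7 ∧ j.val = 6 then 1 else 0)

noncomputable def PP (α β : ℕ) : Matrix (Fin 8) (Fin 8) ℝ := Matrix.of fun i j =>
  (if i.val = 0 ∧ j.val = 0 then 1 else 0) +
  (if i.val = 0 ∧ j.val = 2 then 1 else 0) +
  (if i.val = 0 ∧ j.val = 7 then (β:ℝ) else 0) +
  (if i.val = 1 ∧ j.val = 1 then 1 else 0) +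
  (if i.val = 1 ∧ j.val = 3 then (α:ℝ) else 0) +
  (if i.val = 1 ∧ j.val = 4 then 1 else 0) +
  (if i.val = 1 ∧ j.val = 6 then 1 else 0) +
  (if i.val = 2 ∧ j.val = 0 then (α:ℝ) else 0) +
  (if i.val = 2 ∧ j.val = 2 then (α:ℝ) else 0) +
  (if i.val = 2 ∧ j.val = 5 then 2 else 0) +
  (if i.val = 3 ∧ j.val = 1 then 1 else 0) +
  (if i.val = 3 ∧ j.val = 3 then (α:ℝ) else 0) +
  (if i.val = 3 ∧ j.val = 4 then 1 else 0) +
  (if i.val = 3 ∧ j.val = 6 then 1 else 0) +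
  (if i.val = 4 ∧ j.val = 3 then 2 else 0) +
  (if i.val = 4 ∧ j.val = 4 then 2 else 0) +
  (if i.val = 5 ∧ j.val = 0 then 1 else 0) +
  (if i.val = 5 ∧ j.val = 2 then 1 else 0) +
  (if i.val = 5 ∧ j.val = 5 then 2 else 0) +
  (if i.val = 6 ∧ j.val = 1 then (β:ℝ) else 0) +
  (if i.val = 6 ∧ j.val = 6 then (β:ℝ) else 0) +
  (if i.val = 7 ∧ j.val = 0 then 1 else 0) +
  (if i.val = 7 ∧ j.val = 2 then 1 else 0) +
  (if i.val = 7 ∧ j.val = 7 then (β:ℝ) else 0)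

lemma fv0 : ((0:Fin 8):ℕ) = 0 := rfl
lemma fv1 : ((1:Fin 8):ℕ) = 1 := rfl
lemma fv2 : ((2:Fin 8):ℕ) = 2 := rfl
lemma fv3 : ((3:Fin 8):ℕ) = 3 := rfl
lemma fv4 : ((4:Fin 8):ℕ) = 4 := rfl
lemma fv5 : ((5:Fin 8):ℕ) = 5 := rfl
lemma fv6 : ((6:Fin 8):ℕ) = 6 := rfl
lemma fv7 : ((7:Fin 8):ℕ) = 7 := rfl

set_option maxHeartbeats 1600000 in
lemma NN_mul (α β : ℕ) : NN α β * NN α β = PP α β := by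
  ext i j
  fin_cases i <;> fin_cases j <;>
    · simp only [Matrix.mul_apply, Fin.sum_univ_eight]
      simp [NN, PP, fv0, fv1, fv2, fv3, fv4, fv5, fv6, fv7]

lemma trNN1 (α β : ℕ) : Matrix.trace (NN α β ^ 1) = 0 := by
  simp [Matrix.trace, Matrix.diag, Fin.sum_univ_eight, NN, fv0, fv1, fv2, fv3, fv4, fv5, fv6, fv7]

lemma trNN2 (α β : ℕ) : Matrix.trace (NN α β ^ 2) = 2*(α:ℝ) + 2*(β:ℝ) + 6 := by
  rw [sq, NN_mul]
  simp [Matrix.trace, Matrix.diag, Fin.sum_univ_eight, PP, fv0, fv1, fv2, fv3, fv4, fv5, fv6, fv7]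
  ring

set_option maxHeartbeats 1600000 in
lemma trNN3 (α β : ℕ) : Matrix.trace (NN α β ^ 3) = 0 := by
  rw [pow_succ, sq, NN_mul]
  simp [Matrix.trace, Matrix.diag, Matrix.mul_apply, Fin.sum_univ_eight, PP, NN, fv0, fv1, fv2, fv3, fv4, fv5, fv6, fv7]

set_option maxHeartbeats 1600000 in
lemma trNN4 (α β : ℕ) :
    Matrix.trace (NN α β ^ 4) = 2*(α:ℝ)^2 + 2*(β:ℝ)^2 + 4*(α:ℝ) + 4*(β:ℝ) + 18 := by
  have h4 : NN α β ^ 4 = PP α β * PP α β := by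
    rw [show (4:ℕ) = 2+2 from rfl, pow_add, sq, NN_mul]
  rw [h4]
  simp [Matrix.trace, Matrix.diag, Matrix.mul_apply, Fin.sum_univ_eight, PP, fv0, fv1, fv2, fv3, fv4, fv5, fv6, fv7]
  ring

set_option maxHeartbeats 1600000 in
lemma MB_eq (p q : ℕ) (hp : 4 ≤ p) (hpq : p < q) :
    (Matrix.of fun i j => dotProduct (bB p q i) (aB p q j)) = NN (q-1) (p-3) := by
  ext i j
  fin_cases i <;> fin_cases j <;>
    · norm_num [aB, bB, ind_dot, NN, Matrix.of_apply, fv0, fv1, fv2, fv3, fv4, fv5, fv6, fv7]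
      try norm_cast
      try omega

set_option maxHeartbeats 1600000 in
lemma MD_eq (p q : ℕ) (hp : 4 ≤ p) (hpq : p < q) :
    (Matrix.of fun i j => dotProduct (bD p q i) (aD p q j)) = NN (p-1) (q-3) := by
  ext i j
  fin_cases i <;> fin_cases j <;>
    · norm_num [aD, bD, ind_dot, NN, Matrix.of_apply, fv0, fv1, fv2, fv3, fv4, fv5, fv6, fv7]
      try norm_cast
      try omega

lemma sB (p q : ℕ) (hp : 4 ≤ p) (hpq : p < q) (k : ℕ) :
    spectralMoment (BTree p q 2 0) (k+1) = Matrix.trace (NN (q-1) (p-3) ^ (k+1)) := by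
  unfold spectralMoment
  rw [adjMat_B p q hp hpq, trace_sum_vecMulVec_pow, MB_eq p q hp hpq]

lemma sD (p q : ℕ) (hp : 4 ≤ p) (hpq : p < q) (k : ℕ) :
    spectralMoment (DTree p q 2 0) (k+1) = Matrix.trace (NN (p-1) (q-3) ^ (k+1)) := by
  unfold spectralMoment
  rw [adjMat_D p q hp hpq, trace_sum_vecMulVec_pow, MD_eq p q hp hpq]

/-- For `4 ≤ p < q` and `n = p + q`:
`S_i(D_{p,q}^{2,0}) = S_i(B_{p,q}^{2,0})` for `i = 0,1,2,3`, and
`S_4(B_{p,q}^{2,0}) - S_4(D_{p,q}^{2,0}) = 8(q - p) > 0`; in particular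
`D_{p,q}^{2,0} ≺_s B_{p,q}^{2,0}`. -/
theorem stmt_16 (p q : ℕ) (hp : 4 ≤ p) (hpq : p < q) :
    (∀ i < 4, spectralMoment (DTree p q 2 0) i = spectralMoment (BTree p q 2 0) i) ∧
    spectralMoment (BTree p q 2 0) 4 - spectralMoment (DTree p q 2 0) 4
      = 8 * ((q : ℝ) - (p : ℝ)) ∧
    0 < spectralMoment (BTree p q 2 0) 4 - spectralMoment (DTree p q 2 0) 4 ∧
    SLt (DTree p q 2 0) (BTree p q 2 0) := by
  have c1 : ((q-1:ℕ):ℝ) = (q:ℝ) - 1 := by rw [Nat.cast_sub (by omega)]; norm_num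
  have c2 : ((p-3:ℕ):ℝ) = (p:ℝ) - 3 := by rw [Nat.cast_sub (by omega)]; norm_num
  have c3 : ((p-1:ℕ):ℝ) = (p:ℝ) - 1 := by rw [Nat.cast_sub (by omega)]; norm_num
  have c4 : ((q-3:ℕ):ℝ) = (q:ℝ) - 3 := by rw [Nat.cast_sub (by omega)]; norm_num
  have hB1 : spectralMoment (BTree p q 2 0) 1 = Matrix.trace (NN (q-1) (p-3) ^ 1) :=
    sB p q hp hpq 0
  have hB2 : spectralMoment (BTree p q 2 0) 2 = Matrix.trace (NN (q-1) (p-3) ^ 2) :=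
    sB p q hp hpq 1
  have hB3 : spectralMoment (BTree p q 2 0) 3 = Matrix.trace (NN (q-1) (p-3) ^ 3) :=
    sB p q hp hpq 2
  have hB4 : spectralMoment (BTree p q 2 0) 4 = Matrix.trace (NN (q-1) (p-3) ^ 4) :=
    sB p q hp hpq 3
  have hD1 : spectralMoment (DTree p q 2 0) 1 = Matrix.trace (NN (p-1) (q-3) ^ 1) :=
    sD p q hp hpq 0
  have hD2 : spectralMoment (DTree p q 2 0) 2 = Matrix.trace (NN (p-1) (q-3) ^ 2) :=
    sD p q hp hpq 1
  have hD3 : spectralMoment (DTree p q 2 0) 3 = Matrix.trace (NN (p-1) (q-3) ^ 3) :=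
    sD p q hp hpq 2
  have hD4 : spectralMoment (DTree p q 2 0) 4 = Matrix.trace (NN (p-1) (q-3) ^ 4) :=
    sD p q hp hpq 3
  have hS0 : spectralMoment (DTree p q 2 0) 0 = spectralMoment (BTree p q 2 0) 0 := by
    simp [spectralMoment, pow_zero, Matrix.trace_one]
  have hS1 : spectralMoment (DTree p q 2 0) 1 = spectralMoment (BTree p q 2 0) 1 := by
    rw [hB1, hD1, trNN1, trNN1]
  have hS2 : spectralMoment (DTree p q 2 0) 2 = spectralMoment (BTree p q 2 0) 2 := by
    rw [hB2, hD2, trNN2, trNN2, c1, c2, c3, c4]; ring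
  have hS3 : spectralMoment (DTree p q 2 0) 3 = spectralMoment (BTree p q 2 0) 3 := by
    rw [hB3, hD3, trNN3, trNN3]
  have hdiff : spectralMoment (BTree p q 2 0) 4 - spectralMoment (DTree p q 2 0) 4
      = 8 * ((q : ℝ) - (p : ℝ)) := by
    rw [hB4, hD4, trNN4, trNN4, c1, c2, c3, c4]; ring
  have hcast : (p:ℝ) < (q:ℝ) := by exact_mod_cast hpq
  have hpos : 0 < spectralMoment (BTree p q 2 0) 4 - spectralMoment (DTree p q 2 0) 4 := by
    rw [hdiff]; linarith
  have hall : ∀ i < 4, spectralMoment (DTree p q 2 0) i = spectralMoment (BTree p q 2 0) i := by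
    intro i hi
    interval_cases i
    · exact hS0
    · exact hS1
    · exact hS2
    · exact hS3
  refine ⟨hall, hdiff, hpos, 4, by norm_num, ?_, hall, by linarith⟩
  simp only [Fintype.card_fin]
  omega
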